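/- Chvátal's conjecture holds for intersecting families of sets of size at most 2: if F is an intersecting family in which every member has at most 2 elements, and C is the downset generated by F, then there is a vertex a with |F| ≤ |st_C(a)|. -/

import Mathlib

/-- Chvátal's conjecture for intersecting families of sets of size at most 2.
(`F` is assumed nonempty so that the generated downset has a vertex.) -/
theorem stmt_12 {α : Type*} [DecidableEq α] (F : Finset (Finset α))
    (hne : F.Nonempty)
    (hF : ∀ A ∈ F, ∀ B ∈ F, (A ∩ B).Nonempty)
    (h2 : ∀ B ∈ F, B.card ≤ 2) :
    let C : Finset (Finset α) := F.biUnion Finset.powerset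
    ∃ a : α, {a} ∈ C ∧ F.card ≤ (C.filter (fun B => a ∈ B)).card := by
  intro C
  by_cases hcom : ∃ a, ∀ B ∈ F, a ∈ B
  · obtain ⟨a, ha⟩ := hcom
    obtain ⟨B0, hB0⟩ := hne
    refine ⟨a, ?_, ?_⟩
    · simp only [C, Finset.mem_biUnion, Finset.mem_powerset]
      exact ⟨B0, hB0, Finset.singleton_subset_iff.2 (ha B0 hB0)⟩
    · apply Finset.card_le_card
      intro B hB
      simp only [C, Finset.mem_filter, Finset.mem_biUnion, Finset.mem_powerset]
      exact ⟨⟨B, hB, le_refl _⟩, ha B hB⟩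
  · push_neg at hcom
    have hcard2 : ∀ B ∈ F, B.card = 2 := by
      intro B hB
      rcases Nat.lt_or_ge B.card 2 with h | h
      · exfalso
        have h1 : B.Nonempty := by
          obtain ⟨x, hx⟩ := hF B hB B hB
          exact ⟨x, (Finset.mem_inter.1 hx).1⟩
        have hc1 : B.card = 1 :=
          le_antisymm (Nat.lt_succ_iff.1 h) (Finset.one_le_card.2 h1)
        obtain ⟨x, hx⟩ := Finset.card_eq_one.1 hc1
        obtain ⟨E, hE, hxE⟩ := hcom x
        obtain ⟨y, hy⟩ := hF B hB E hE
        obtain ⟨hyB, hyE⟩ := Finset.mem_inter.1 hy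
        rw [hx, Finset.mem_singleton] at hyB
        exact hxE (hyB ▸ hyE)
      · exact le_antisymm (h2 B hB) h
    obtain ⟨A, hA⟩ := hne
    obtain ⟨a, b, hab, hAab⟩ := Finset.card_eq_two.1 (hcard2 A hA)
    obtain ⟨B, hB, haB⟩ := hcom a
    have hbB : b ∈ B := by
      obtain ⟨y, hy⟩ := hF A hA B hB
      obtain ⟨hyA, hyB⟩ := Finset.mem_inter.1 hy
      rw [hAab] at hyA
      rcases Finset.mem_insert.1 hyA with rfl | hy2
      · exact absurd hyB haB
      · rwa [Finset.mem_singleton.1 hy2] at hyB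
    -- get the other vertex of B
    obtain ⟨x, y, hxy, hBxy⟩ := Finset.card_eq_two.1 (hcard2 B hB)
    have hbmem : b = x ∨ b = y := by
      have := hBxy ▸ hbB
      simpa using this
    obtain ⟨c, hbc, hBbc⟩ : ∃ c, b ≠ c ∧ B = {b, c} := by
      rcases hbmem with rfl | rfl
      · exact ⟨y, hxy, hBxy⟩
      · exact ⟨x, fun h => hxy h.symm, by rw [hBxy, Finset.pair_comm]⟩
    have hca : c ≠ a := by
      intro h; apply haB; rw [hBbc]; simp [h]
    obtain ⟨D, hD, hbD⟩ := hcom b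
    have haD : a ∈ D := by
      obtain ⟨y, hy⟩ := hF A hA D hD
      obtain ⟨hyA, hyD⟩ := Finset.mem_inter.1 hy
      rw [hAab] at hyA
      rcases Finset.mem_insert.1 hyA with rfl | hy2
      · exact hyD
      · exact absurd ((Finset.mem_singleton.1 hy2) ▸ hyD) hbD
    have hcD : c ∈ D := by
      obtain ⟨y, hy⟩ := hF B hB D hD
      obtain ⟨hyB, hyD⟩ := Finset.mem_inter.1 hy
      rw [hBbc] at hyB
      rcases Finset.mem_insert.1 hyB with rfl | hy2
      · exact absurd hyD hbD
      · exact (Finset.mem_singleton.1 hy2) ▸ hyD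
    have hDac : D = {a, c} := by
      have hsub : ({a, c} : Finset α) ⊆ D := by
        intro z hz
        rcases Finset.mem_insert.1 hz with rfl | hz2
        · exact haD
        · exact (Finset.mem_singleton.1 hz2) ▸ hcD
      exact (Finset.eq_of_subset_of_card_le hsub
        (by rw [hcard2 D hD, Finset.card_pair (Ne.symm hca)])).symm
    -- F ⊆ {{a,b},{b,c},{a,c}}
    have hFsub : F ⊆ ({{a, b}, {b, c}, {a, c}} : Finset (Finset α)) := by
      intro E hE
      have h2E := hcard2 E hE
      have eqE : ∀ u v : α, u ≠ v → u ∈ E → v ∈ E → E = {u, v} := by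
        intro u v huv hu hv
        have hsub : ({u, v} : Finset α) ⊆ E := by
          intro z hz
          rcases Finset.mem_insert.1 hz with rfl | hz2
          · exact hu
          · exact (Finset.mem_singleton.1 hz2) ▸ hv
        exact (Finset.eq_of_subset_of_card_le hsub
          (by rw [h2E, Finset.card_pair huv])).symm
      simp only [Finset.mem_insert, Finset.mem_singleton]
      by_cases haE : a ∈ E
      · by_cases hbE : b ∈ E
        · exact Or.inl (eqE a b hab haE hbE)
        · -- c ∈ E from E ∩ B
          have hcE : c ∈ E := by
            obtain ⟨y, hy⟩ := hF E hE B hB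
            obtain ⟨hyE, hyB⟩ := Finset.mem_inter.1 hy
            rw [hBbc] at hyB
            rcases Finset.mem_insert.1 hyB with rfl | hy2
            · exact absurd hyE hbE
            · exact (Finset.mem_singleton.1 hy2) ▸ hyE
          exact Or.inr (Or.inr (eqE a c (Ne.symm hca) haE hcE))
      · have hbE : b ∈ E := by
          obtain ⟨y, hy⟩ := hF E hE A hA
          obtain ⟨hyE, hyA⟩ := Finset.mem_inter.1 hy
          rw [hAab] at hyA
          rcases Finset.mem_insert.1 hyA with rfl | hy2
          · exact absurd hyE haE
          · exact (Finset.mem_singleton.1 hy2) ▸ hyE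
        have hcE : c ∈ E := by
          obtain ⟨y, hy⟩ := hF E hE D hD
          obtain ⟨hyE, hyD⟩ := Finset.mem_inter.1 hy
          rw [hDac] at hyD
          rcases Finset.mem_insert.1 hyD with rfl | hy2
          · exact absurd hyE haE
          · exact (Finset.mem_singleton.1 hy2) ▸ hyE
        exact Or.inr (Or.inl (eqE b c hbc hbE hcE))
    have hF3 : F.card ≤ 3 := by
      calc F.card ≤ ({{a, b}, {b, c}, {a, c}} : Finset (Finset α)).card :=
            Finset.card_le_card hFsub
        _ ≤ 3 := by
            apply le_trans (Finset.card_insert_le _ _)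
            simp [Finset.card_insert_le]
            exact lt_of_le_of_lt (Finset.card_insert_le _ _) (by simp)
    -- star at a contains {a}, {a,b}, {a,c}
    refine ⟨a, ?_, ?_⟩
    · simp only [C, Finset.mem_biUnion, Finset.mem_powerset]
      exact ⟨A, hA, by rw [hAab]; intro z hz; simp at hz; simp [hz]⟩
    · have hS : ({{a}, {a, b}, {a, c}} : Finset (Finset α)) ⊆
          C.filter (fun B => a ∈ B) := by
        intro E hE
        simp only [Finset.mem_insert, Finset.mem_singleton] at hE
        simp only [C, Finset.mem_filter, Finset.mem_biUnion, Finset.mem_powerset]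
        rcases hE with rfl | rfl | rfl
        · exact ⟨⟨A, hA, by rw [hAab]; intro z hz; simp at hz; simp [hz]⟩, by simp⟩
        · exact ⟨⟨A, hA, by rw [hAab]⟩, by simp⟩
        · exact ⟨⟨D, hD, by rw [hDac]⟩, by simp⟩
      have hScard : ({{a}, {a, b}, {a, c}} : Finset (Finset α)).card = 3 := by
        rw [Finset.card_insert_of_notMem, Finset.card_insert_of_notMem,
          Finset.card_singleton]
        · simp only [Finset.mem_singleton]
          intro h
          have : b ∈ ({a, c} : Finset α) := h ▸ (by simp : b ∈ ({a, b} : Finset α))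
          simp at this
          rcases this with h' | h'
          · exact hab h'.symm
          · exact hbc h'
        · simp only [Finset.mem_insert, Finset.mem_singleton]
          push_neg
          constructor
          · intro h
            have : b ∈ ({a} : Finset α) := h ▸ (by simp : b ∈ ({a, b} : Finset α))
            exact hab (Finset.mem_singleton.1 this).symm
          · intro h
            have : c ∈ ({a} : Finset α) := h.symm ▸ (by simp : c ∈ ({a, c} : Finset α))
            exact hca (Finset.mem_singleton.1 this)
      calc F.card ≤ 3 := hF3
        _ = ({{a}, {a, b}, {a, c}} : Finset (Finset α)).card := hScard.symm
        _ ≤ _ := Finset.card_le_card hS
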